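/- Let X_1, …, X_N : Ω → ℝ^K be independent random vectors on a probability space such that for each i the second-moment matrix is the identity, i.e. E[X_{ij}X_{iℓ}] = δ_{jℓ} for all coordinates j, ℓ, and ‖X_i‖ ≤ ξ₀ almost surely for a constant ξ₀ > 0. Let Q̂ be the K×K random matrix with entries Q̂_{jℓ} = N⁻¹ ∑_{i=1}^N X_{ij}X_{iℓ}. Then E[‖Q̂ − I_K‖_F²] ≤ ξ₀² K / N, where ‖A‖_F² = ∑_{j,ℓ} A_{jℓ}² is the squared Frobenius norm. -/

import Mathlib

open MeasureTheory ProbabilityTheory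

/-- Mean-square Frobenius bound for the empirical second-moment matrix of independent,
isotropic, a.s. norm-bounded random vectors: `E‖Q̂ − I_K‖_F² ≤ ξ₀²K/N`. -/
theorem stmt_3 (K N : ℕ) (hN : 0 < N)
    {Ω : Type*} [MeasurableSpace Ω] (μ : Measure Ω) [IsProbabilityMeasure μ]
    (X : Fin N → Ω → EuclideanSpace ℝ (Fin K))
    (hmeas : ∀ i, Measurable (X i))
    (hindep : iIndepFun X μ)
    (hmom : ∀ i, ∀ j ℓ : Fin K,
      ∫ ω, X i ω j * X i ω ℓ ∂μ = if j = ℓ then (1 : ℝ) else 0)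
    (ξ₀ : ℝ) (hξ₀ : 0 < ξ₀)
    (hbdd : ∀ i, ∀ᵐ ω ∂μ, ‖X i ω‖ ≤ ξ₀) :
    ∫ ω, ∑ j : Fin K, ∑ ℓ : Fin K,
        ((N : ℝ)⁻¹ * ∑ i : Fin N, X i ω j * X i ω ℓ
          - if j = ℓ then (1 : ℝ) else 0) ^ 2 ∂μ
      ≤ ξ₀ ^ 2 * K / N := by
  classical
  have hNne : (N : ℝ) ≠ 0 := Nat.cast_ne_zero.mpr hN.ne'
  set δ : Fin K → Fin K → ℝ := fun j ℓ => if j = ℓ then 1 else 0 with hδ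
  set Y : Fin N → Fin K → Fin K → Ω → ℝ :=
    fun i j ℓ ω => X i ω j * X i ω ℓ - δ j ℓ with hYdef
  -- measurability of coordinates and products
  have hXm : ∀ i (j : Fin K), Measurable fun ω => X i ω j :=
    fun i j => (measurable_pi_apply j).comp ((WithLp.measurable_ofLp 2 (Fin K → ℝ)).comp (hmeas i))
  have hPm : ∀ i (j ℓ : Fin K), Measurable fun ω => X i ω j * X i ω ℓ :=
    fun i j ℓ => (hXm i j).mul (hXm i ℓ)
  have hYm : ∀ i j ℓ, Measurable (Y i j ℓ) :=
    fun i j ℓ => (hPm i j ℓ).sub measurable_const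
  -- ‖x‖² = ∑ (x j)²
  have hnorm : ∀ x : EuclideanSpace ℝ (Fin K), ∑ j : Fin K, (x j) ^ 2 = ‖x‖ ^ 2 := by
    intro x
    rw [EuclideanSpace.norm_eq, Real.sq_sqrt (by positivity)]
    simp [Real.norm_eq_abs, sq_abs]
  -- coordinate bound
  have hcoord : ∀ (x : EuclideanSpace ℝ (Fin K)) (j : Fin K), |x j| ≤ ‖x‖ := by
    intro x j
    rw [EuclideanSpace.norm_eq]
    have h1 : |x j| = Real.sqrt (‖x j‖ ^ 2) := by
      rw [Real.sqrt_sq (norm_nonneg _), Real.norm_eq_abs]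
    rw [h1]
    exact Real.sqrt_le_sqrt (Finset.single_le_sum
      (f := fun i : Fin K => ‖x i‖ ^ 2) (fun i _ => by positivity) (Finset.mem_univ j))
  -- a.s. bound on products
  have hPbd : ∀ i (j ℓ : Fin K), ∀ᵐ ω ∂μ, |X i ω j * X i ω ℓ| ≤ ξ₀ ^ 2 := by
    intro i j ℓ
    filter_upwards [hbdd i] with ω h
    rw [abs_mul]
    calc |X i ω j| * |X i ω ℓ| ≤ ‖X i ω‖ * ‖X i ω‖ :=
          mul_le_mul (hcoord _ j) (hcoord _ ℓ) (abs_nonneg _) (norm_nonneg _)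
      _ ≤ ξ₀ * ξ₀ := mul_le_mul h h (norm_nonneg _) hξ₀.le
      _ = ξ₀ ^ 2 := (pow_two ξ₀).symm
  have hPint : ∀ i (j ℓ : Fin K), Integrable (fun ω => X i ω j * X i ω ℓ) μ := by
    intro i j ℓ
    refine (integrable_const (ξ₀ ^ 2)).mono' (hPm i j ℓ).aestronglyMeasurable ?_
    filter_upwards [hPbd i j ℓ] with ω h using by rw [Real.norm_eq_abs]; exact h
  have hYint : ∀ i j ℓ, Integrable (Y i j ℓ) μ :=
    fun i j ℓ => (hPint i j ℓ).sub (integrable_const _)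
  have hδbd : ∀ j ℓ, |δ j ℓ| ≤ 1 := by
    intro j ℓ; by_cases h : j = ℓ <;> simp [hδ, h]
  have hYbd : ∀ i j ℓ, ∀ᵐ ω ∂μ, |Y i j ℓ ω| ≤ ξ₀ ^ 2 + 1 := by
    intro i j ℓ
    filter_upwards [hPbd i j ℓ] with ω h
    calc |Y i j ℓ ω| ≤ |X i ω j * X i ω ℓ| + |δ j ℓ| := abs_sub _ _
      _ ≤ ξ₀ ^ 2 + 1 := add_le_add h (hδbd j ℓ)
  have hYmean : ∀ i j ℓ, ∫ ω, Y i j ℓ ω ∂μ = 0 := by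
    intro i j ℓ
    rw [hYdef]
    simp only
    rw [integral_sub (hPint i j ℓ) (integrable_const _), hmom i j ℓ, integral_const]
    simp [hδ]
  -- cross terms vanish
  have hcross : ∀ i i' : Fin N, i ≠ i' → ∀ j ℓ : Fin K,
      ∫ ω, Y i j ℓ ω * Y i' j ℓ ω ∂μ = 0 := by
    intro i i' hne j ℓ
    have hφ : Measurable (fun x : EuclideanSpace ℝ (Fin K) => x j * x ℓ - δ j ℓ) :=
      (((measurable_pi_apply j).comp (WithLp.measurable_ofLp 2 (Fin K → ℝ))).mul
        ((measurable_pi_apply ℓ).comp (WithLp.measurable_ofLp 2 (Fin K → ℝ)))).sub measurable_const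
    have hind : IndepFun (Y i j ℓ) (Y i' j ℓ) μ :=
      (hindep.indepFun hne).comp hφ hφ
    have := hind.integral_mul_eq_mul_integral (hYm i j ℓ).aestronglyMeasurable
      (hYm i' j ℓ).aestronglyMeasurable
    have heq : (fun ω => Y i j ℓ ω * Y i' j ℓ ω) = Y i j ℓ * Y i' j ℓ := rfl
    calc ∫ ω, Y i j ℓ ω * Y i' j ℓ ω ∂μ = ∫ ω, (Y i j ℓ * Y i' j ℓ) ω ∂μ := by rw [heq]
      _ = (∫ ω, Y i j ℓ ω ∂μ) * ∫ ω, Y i' j ℓ ω ∂μ := this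
      _ = 0 := by rw [hYmean, hYmean, mul_zero]
  -- integrability of products of Y's
  have hYsqint : ∀ i i' j ℓ, Integrable (fun ω => Y i j ℓ ω * Y i' j ℓ ω) μ := by
    intro i i' j ℓ
    refine (integrable_const ((ξ₀ ^ 2 + 1) * (ξ₀ ^ 2 + 1))).mono'
      ((hYm i j ℓ).mul (hYm i' j ℓ)).aestronglyMeasurable ?_
    filter_upwards [hYbd i j ℓ, hYbd i' j ℓ] with ω h1 h2
    rw [Real.norm_eq_abs, abs_mul]
    exact mul_le_mul h1 h2 (abs_nonneg _) (by positivity)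
  have hPsqint : ∀ i (j ℓ : Fin K), Integrable (fun ω => (X i ω j * X i ω ℓ) ^ 2) μ := by
    intro i j ℓ
    refine (integrable_const ((ξ₀ ^ 2) ^ 2)).mono' ((hPm i j ℓ).pow_const 2).aestronglyMeasurable ?_
    filter_upwards [hPbd i j ℓ] with ω h
    rw [Real.norm_eq_abs, abs_pow]
    exact pow_le_pow_left₀ (abs_nonneg _) h 2
  -- ∫ Y² = ∫ P² − δ²
  have hYsq : ∀ i j ℓ, ∫ ω, Y i j ℓ ω * Y i j ℓ ω ∂μ
      = (∫ ω, (X i ω j * X i ω ℓ) ^ 2 ∂μ) - (δ j ℓ) ^ 2 := by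
    intro i j ℓ
    have hexp : ∀ ω, Y i j ℓ ω * Y i j ℓ ω
        = (X i ω j * X i ω ℓ) ^ 2 - (2 * δ j ℓ) * (X i ω j * X i ω ℓ) + (δ j ℓ) ^ 2 := by
      intro ω; simp only [hYdef]; ring
    have hf : Integrable (fun ω => (X i ω j * X i ω ℓ) ^ 2
        - (2 * δ j ℓ) * (X i ω j * X i ω ℓ)) μ :=
      (hPsqint i j ℓ).sub ((hPint i j ℓ).const_mul _)
    rw [integral_congr_ae (Filter.Eventually.of_forall hexp),
      integral_add hf (integrable_const _),
      integral_sub (hPsqint i j ℓ) ((hPint i j ℓ).const_mul _),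
      integral_const_mul, hmom i j ℓ, integral_const]
    simp only [hδ, measure_univ, ENNReal.toReal_one, smul_eq_mul, one_mul]
    by_cases h : j = ℓ <;> simp [h] <;> ring
  -- per-vector Frobenius bound: ∑_{jℓ} ∫ Y² ≤ ξ₀² K
  have hfrob : ∀ i, ∑ j : Fin K, ∑ ℓ : Fin K, ∫ ω, Y i j ℓ ω * Y i j ℓ ω ∂μ
      ≤ ξ₀ ^ 2 * K := by
    intro i
    have h1 : ∑ j : Fin K, ∑ ℓ : Fin K, ∫ ω, Y i j ℓ ω * Y i j ℓ ω ∂μ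
        = (∑ j : Fin K, ∑ ℓ : Fin K, ∫ ω, (X i ω j * X i ω ℓ) ^ 2 ∂μ)
          - ∑ j : Fin K, ∑ ℓ : Fin K, (δ j ℓ) ^ 2 := by
      rw [← Finset.sum_sub_distrib]
      refine Finset.sum_congr rfl fun j _ => ?_
      rw [← Finset.sum_sub_distrib]
      exact Finset.sum_congr rfl fun ℓ _ => hYsq i j ℓ
    have hδsum : ∑ j : Fin K, ∑ ℓ : Fin K, (δ j ℓ) ^ 2 = (K : ℝ) := by
      simp [hδ, Finset.sum_ite_eq, Finset.mem_univ]
    have h2 : ∑ j : Fin K, ∑ ℓ : Fin K, ∫ ω, (X i ω j * X i ω ℓ) ^ 2 ∂μ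
        = ∫ ω, (∑ j : Fin K, (X i ω j) ^ 2) ^ 2 ∂μ := by
      calc ∑ j : Fin K, ∑ ℓ : Fin K, ∫ ω, (X i ω j * X i ω ℓ) ^ 2 ∂μ
          = ∑ j : Fin K, ∫ ω, ∑ ℓ : Fin K, (X i ω j * X i ω ℓ) ^ 2 ∂μ :=
            Finset.sum_congr rfl fun j _ =>
              (integral_finset_sum _ fun ℓ _ => hPsqint i j ℓ).symm
        _ = ∫ ω, ∑ j : Fin K, ∑ ℓ : Fin K, (X i ω j * X i ω ℓ) ^ 2 ∂μ :=
            (integral_finset_sum _ fun j _ =>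
              integrable_finset_sum _ fun ℓ _ => hPsqint i j ℓ).symm
        _ = ∫ ω, (∑ j : Fin K, (X i ω j) ^ 2) ^ 2 ∂μ := by
            refine integral_congr_ae (Filter.Eventually.of_forall fun ω => ?_)
            show ∑ j : Fin K, ∑ ℓ : Fin K, (X i ω j * X i ω ℓ) ^ 2
              = (∑ j : Fin K, (X i ω j) ^ 2) ^ 2
            rw [pow_two (∑ j : Fin K, (X i ω j) ^ 2), Finset.sum_mul_sum]
            exact Finset.sum_congr rfl fun j _ => Finset.sum_congr rfl fun ℓ _ => by ring
    have hS2 : ∀ᵐ ω ∂μ, ∑ j : Fin K, (X i ω j) ^ 2 ≤ ξ₀ ^ 2 := by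
      filter_upwards [hbdd i] with ω h
      rw [hnorm]
      exact pow_le_pow_left₀ (norm_nonneg _) h 2
    have hSint : Integrable (fun ω => ∑ j : Fin K, (X i ω j) ^ 2) μ := by
      refine integrable_finset_sum _ fun j _ => ?_
      have := hPint i j j
      refine this.congr (Filter.Eventually.of_forall fun ω => ?_)
      ring
    have hS2int : Integrable (fun ω => (∑ j : Fin K, (X i ω j) ^ 2) ^ 2) μ := by
      refine (integrable_const ((ξ₀ ^ 2) ^ 2)).mono'
        ((by fun_prop : Measurable fun ω => (∑ j : Fin K, (X i ω j) ^ 2) ^ 2)).aestronglyMeasurable ?_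
      filter_upwards [hS2] with ω h
      rw [Real.norm_eq_abs, abs_pow]
      exact pow_le_pow_left₀ (by positivity) (by rwa [abs_of_nonneg (by positivity)]) 2
    have h3 : ∫ ω, (∑ j : Fin K, (X i ω j) ^ 2) ^ 2 ∂μ ≤ ξ₀ ^ 2 * K := by
      have hmono : ∫ ω, (∑ j : Fin K, (X i ω j) ^ 2) ^ 2 ∂μ
          ≤ ∫ ω, ξ₀ ^ 2 * ∑ j : Fin K, (X i ω j) ^ 2 ∂μ := by
        refine integral_mono_ae hS2int (hSint.const_mul _) ?_
        filter_upwards [hS2] with ω h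
        calc (∑ j : Fin K, (X i ω j) ^ 2) ^ 2
            = (∑ j : Fin K, (X i ω j) ^ 2) * (∑ j : Fin K, (X i ω j) ^ 2) := pow_two _
          _ ≤ ξ₀ ^ 2 * ∑ j : Fin K, (X i ω j) ^ 2 :=
              mul_le_mul_of_nonneg_right h (by positivity)
      have heq : ∫ ω, ξ₀ ^ 2 * ∑ j : Fin K, (X i ω j) ^ 2 ∂μ = ξ₀ ^ 2 * K := by
        rw [integral_const_mul, integral_finset_sum _ (fun j _ =>
          (hPint i j j).congr (Filter.Eventually.of_forall fun ω => by ring))]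
        have : ∀ j : Fin K, ∫ ω, (X i ω j) ^ 2 ∂μ = 1 := by
          intro j
          have h5 := hmom i j j
          rw [if_pos rfl] at h5
          rw [← h5]
          exact integral_congr_ae (Filter.Eventually.of_forall fun ω => by ring)
        simp [this]
      linarith
    have hK0 : (0 : ℝ) ≤ (K : ℝ) := Nat.cast_nonneg K
    rw [h1, hδsum, h2]
    linarith
  -- pointwise rewriting of the integrand
  have key : ∀ ω, (∑ j : Fin K, ∑ ℓ : Fin K,
      ((N : ℝ)⁻¹ * ∑ i : Fin N, X i ω j * X i ω ℓ - if j = ℓ then (1 : ℝ) else 0) ^ 2)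
      = ((N : ℝ)⁻¹) ^ 2 * ∑ j : Fin K, ∑ ℓ : Fin K, (∑ i : Fin N, Y i j ℓ ω) ^ 2 := by
    intro ω
    rw [Finset.mul_sum]
    refine Finset.sum_congr rfl fun j _ => ?_
    rw [Finset.mul_sum]
    refine Finset.sum_congr rfl fun ℓ _ => ?_
    have hsum : ∑ i : Fin N, Y i j ℓ ω
        = (∑ i : Fin N, X i ω j * X i ω ℓ) - N * δ j ℓ := by
      rw [hYdef]
      rw [Finset.sum_sub_distrib, Finset.sum_const, Finset.card_univ, Fintype.card_fin,
        nsmul_eq_mul]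
    rw [hsum]
    have hδa : (if j = ℓ then (1 : ℝ) else 0) = δ j ℓ := rfl
    rw [hδa]
    field_simp
  -- main computation
  have hsum_int : ∀ j ℓ, Integrable (fun ω => (∑ i : Fin N, Y i j ℓ ω) ^ 2) μ := by
    intro j ℓ
    have : (fun ω => (∑ i : Fin N, Y i j ℓ ω) ^ 2)
        = fun ω => ∑ i : Fin N, ∑ i' : Fin N, Y i j ℓ ω * Y i' j ℓ ω := by
      funext ω
      rw [pow_two, Finset.sum_mul_sum]
    rw [this]
    exact integrable_finset_sum _ fun i _ =>
      integrable_finset_sum _ fun i' _ => hYsqint i i' j ℓ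
  calc ∫ ω, ∑ j : Fin K, ∑ ℓ : Fin K,
        ((N : ℝ)⁻¹ * ∑ i : Fin N, X i ω j * X i ω ℓ
          - if j = ℓ then (1 : ℝ) else 0) ^ 2 ∂μ
      = ∫ ω, ((N : ℝ)⁻¹) ^ 2 * ∑ j : Fin K, ∑ ℓ : Fin K,
          (∑ i : Fin N, Y i j ℓ ω) ^ 2 ∂μ :=
        integral_congr_ae (Filter.Eventually.of_forall key)
    _ = ((N : ℝ)⁻¹) ^ 2 * ∫ ω, ∑ j : Fin K, ∑ ℓ : Fin K,
          (∑ i : Fin N, Y i j ℓ ω) ^ 2 ∂μ := integral_const_mul _ _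
    _ = ((N : ℝ)⁻¹) ^ 2 * ∑ j : Fin K, ∑ ℓ : Fin K,
          ∫ ω, (∑ i : Fin N, Y i j ℓ ω) ^ 2 ∂μ := by
        rw [integral_finset_sum _ fun j _ => integrable_finset_sum _ fun ℓ _ => hsum_int j ℓ]
        congr 1
        exact Finset.sum_congr rfl fun j _ =>
          integral_finset_sum _ fun ℓ _ => hsum_int j ℓ
    _ = ((N : ℝ)⁻¹) ^ 2 * ∑ j : Fin K, ∑ ℓ : Fin K,
          ∑ i : Fin N, ∫ ω, Y i j ℓ ω * Y i j ℓ ω ∂μ := by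
        congr 1
        refine Finset.sum_congr rfl fun j _ => Finset.sum_congr rfl fun ℓ _ => ?_
        have hexp : ∫ ω, (∑ i : Fin N, Y i j ℓ ω) ^ 2 ∂μ
            = ∑ i : Fin N, ∑ i' : Fin N, ∫ ω, Y i j ℓ ω * Y i' j ℓ ω ∂μ := by
          have : (fun ω => (∑ i : Fin N, Y i j ℓ ω) ^ 2)
              = fun ω => ∑ i : Fin N, ∑ i' : Fin N, Y i j ℓ ω * Y i' j ℓ ω := by
            funext ω; rw [pow_two, Finset.sum_mul_sum]
          rw [this, integral_finset_sum _ fun i _ =>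
            integrable_finset_sum _ fun i' _ => hYsqint i i' j ℓ]
          exact Finset.sum_congr rfl fun i _ =>
            integral_finset_sum _ fun i' _ => hYsqint i i' j ℓ
        rw [hexp]
        refine Finset.sum_congr rfl fun i _ => ?_
        rw [Finset.sum_eq_single i (fun i' _ hne => hcross i i' (Ne.symm hne) j ℓ)
          (fun h => absurd (Finset.mem_univ i) h)]
    _ = ((N : ℝ)⁻¹) ^ 2 * ∑ i : Fin N, ∑ j : Fin K, ∑ ℓ : Fin K,
          ∫ ω, Y i j ℓ ω * Y i j ℓ ω ∂μ := by
        congr 1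
        calc ∑ j : Fin K, ∑ ℓ : Fin K, ∑ i : Fin N, ∫ ω, Y i j ℓ ω * Y i j ℓ ω ∂μ
            = ∑ j : Fin K, ∑ i : Fin N, ∑ ℓ : Fin K, ∫ ω, Y i j ℓ ω * Y i j ℓ ω ∂μ :=
              Finset.sum_congr rfl fun j _ => Finset.sum_comm
          _ = ∑ i : Fin N, ∑ j : Fin K, ∑ ℓ : Fin K, ∫ ω, Y i j ℓ ω * Y i j ℓ ω ∂μ :=
              Finset.sum_comm
    _ ≤ ((N : ℝ)⁻¹) ^ 2 * (N * (ξ₀ ^ 2 * K)) := by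
        refine mul_le_mul_of_nonneg_left ?_ (by positivity)
        calc ∑ i : Fin N, ∑ j : Fin K, ∑ ℓ : Fin K, ∫ ω, Y i j ℓ ω * Y i j ℓ ω ∂μ
            ≤ ∑ _i : Fin N, ξ₀ ^ 2 * K := Finset.sum_le_sum fun i _ => hfrob i
          _ = N * (ξ₀ ^ 2 * K) := by
              rw [Finset.sum_const, Finset.card_univ, Fintype.card_fin, nsmul_eq_mul]
    _ = ξ₀ ^ 2 * K / N := by field_simp
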